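/- Let k be an algebraically closed field, let f ∈ k[x, x₁, x̄₁] be a polynomial in three variables, and let ψ ∈ k[x, x₁] be a nonzero polynomial in two variables. Then the following are equivalent: (a) f is invertible in k[x, x₁, x̄₁][(ψ(x,x₁)·ψ(x,x̄₁))⁻¹], i.e. the image of f in the localization of k[x, x₁, x̄₁] at the powers of ψ(x,x₁)·ψ(x,x̄₁) is a unit; (b) for every λ ∈ k such that ψ(λ, x₁) ≠ 0 in k[x₁], the specialization f(λ, x₁, x̄₁) is invertible in k[x₁, x̄₁][(ψ(λ,x₁)·ψ(λ,x̄₁))⁻¹], i.e. its image in the localization of k[x₁, x̄₁] at the powers of ψ(λ,x₁)·ψ(λ,x̄₁) is a unit. -/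

import Mathlib

open MvPolynomial

theorem myIsUnit_away_iff {A : Type*} [CommRing A] (t f : A) :
    IsUnit (algebraMap A (Localization.Away t) f) ↔ ∃ n : ℕ, f ∣ t ^ n := by
  constructor
  · intro h
    obtain ⟨y, hy⟩ := h.exists_right_inv
    obtain ⟨⟨b, s⟩, hs⟩ := IsLocalization.surj (Submonoid.powers t) y
    obtain ⟨m, hm⟩ := s.2
    have key : algebraMap A (Localization.Away t) (f * b)
        = algebraMap A (Localization.Away t) (s : A) := by
      rw [map_mul, ← hs, ← mul_assoc, hy, one_mul]
    obtain ⟨c, hc⟩ := (IsLocalization.eq_iff_exists (Submonoid.powers t) _).mp key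
    obtain ⟨j, hj⟩ := c.2
    refine ⟨m + j, b * (c : A), ?_⟩
    have hm' : (s : A) = t ^ m := hm.symm
    have hj' : (c : A) = t ^ j := hj.symm
    rw [pow_add, ← hm', ← hj']
    linear_combination -hc
  · rintro ⟨n, g, hg⟩
    have ht : IsUnit (algebraMap A (Localization.Away t) t) :=
      IsLocalization.map_units _ (⟨t, Submonoid.mem_powers t⟩ : Submonoid.powers t)
    have : IsUnit (algebraMap A (Localization.Away t) (t ^ n)) := by
      rw [map_pow]; exact ht.pow n
    rw [hg, map_mul] at this
    exact isUnit_of_mul_isUnit_left this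

theorem my_eval_aeval {n m : ℕ} {k : Type*} [CommSemiring k] (w : Fin m → k)
    (g : Fin n → MvPolynomial (Fin m) k) (p : MvPolynomial (Fin n) k) :
    eval w (aeval g p) = eval (fun i => eval w (g i)) p := by
  induction p using MvPolynomial.induction_on with
  | C a => simp [algebraMap_eq]
  | add p q hp hq => simp [← aeval_eq_bind₁, hp, hq]
  | mul_X p i hp => simp [← aeval_eq_bind₁, hp]

theorem my_dvd_pow {k : Type*} [Field k] [IsAlgClosed k] {n : ℕ}
    (f g : MvPolynomial (Fin n) k)
    (h : ∀ v : Fin n → k, eval v f = 0 → eval v g = 0) : ∃ m : ℕ, f ∣ g ^ m := by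
  have hg : g ∈ (Ideal.span {f}).radical := by
    rw [← vanishingIdeal_zeroLocus_eq_radical (K := k)]
    intro x hx
    exact h x (hx f (Ideal.subset_span rfl))
  obtain ⟨m, hm⟩ := hg
  exact ⟨m, Ideal.mem_span_singleton.mp hm⟩

/-- Let `k` be an algebraically closed field, `f ∈ k[x, x₁, x̄₁]` (variables
`0 ↦ x`, `1 ↦ x₁`, `2 ↦ x̄₁`) and `ψ ∈ k[x, x₁]` a nonzero polynomial. Then `f` is
invertible in `k[x, x₁, x̄₁][(ψ(x,x₁)ψ(x,x̄₁))⁻¹]` if and only if for every `λ ∈ k` with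
`ψ(λ, x₁) ≠ 0`, the specialization `f(λ, x₁, x̄₁)` is invertible in
`k[x₁, x̄₁][(ψ(λ,x₁)ψ(λ,x̄₁))⁻¹]`. -/
theorem isUnit_localization_iff_specializations
    (k : Type*) [Field k] [IsAlgClosed k]
    (f : MvPolynomial (Fin 3) k) (ψ : MvPolynomial (Fin 2) k) (hψ : ψ ≠ 0) :
    IsUnit (algebraMap (MvPolynomial (Fin 3) k)
        (Localization.Away
          ((rename ![(0 : Fin 3), 1] ψ) * (rename ![(0 : Fin 3), 2] ψ))) f)
      ↔
    ∀ lam : k,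
      (aeval ![C lam, X 0] ψ : MvPolynomial (Fin 2) k) ≠ 0 →
      IsUnit (algebraMap (MvPolynomial (Fin 2) k)
        (Localization.Away
          ((aeval ![C lam, X 0] ψ : MvPolynomial (Fin 2) k) *
            (aeval ![C lam, X 1] ψ : MvPolynomial (Fin 2) k)))
        (aeval ![C lam, X 0, X 1] f)) := by
  constructor
  · intro hu lam hl
    rw [myIsUnit_away_iff] at hu ⊢
    obtain ⟨n, hd⟩ := hu
    refine ⟨n, ?_⟩
    have hmap := map_dvd (aeval ![C lam, X 0, X 1] :
      MvPolynomial (Fin 3) k →ₐ[k] MvPolynomial (Fin 2) k) hd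
    have hc1 : (![C lam, X 0, X 1] ∘ ![(0 : Fin 3), 1] : Fin 2 → MvPolynomial (Fin 2) k)
        = ![C lam, X 0] := by funext i; fin_cases i <;> rfl
    have hc2 : (![C lam, X 0, X 1] ∘ ![(0 : Fin 3), 2] : Fin 2 → MvPolynomial (Fin 2) k)
        = ![C lam, X 1] := by funext i; fin_cases i <;> rfl
    have h1 : aeval ![C lam, X 0, X 1] (rename ![(0 : Fin 3), 1] ψ)
        = (aeval ![C lam, X 0] ψ : MvPolynomial (Fin 2) k) := by
      rw [aeval_rename, hc1]
    have h2 : aeval ![C lam, X 0, X 1] (rename ![(0 : Fin 3), 2] ψ)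
        = (aeval ![C lam, X 1] ψ : MvPolynomial (Fin 2) k) := by
      rw [aeval_rename, hc2]
    rwa [map_pow, map_mul, h1, h2] at hmap
  · intro h
    rw [myIsUnit_away_iff]
    apply my_dvd_pow
    intro v hv
    have hev1 : eval v (rename ![(0 : Fin 3), 1] ψ)
        = eval ![v 1, v 2] (aeval ![C (v 0), X 0] ψ : MvPolynomial (Fin 2) k) := by
      rw [eval_rename, my_eval_aeval,
        show (v ∘ ![(0 : Fin 3), 1])
            = (fun i => eval ![v 1, v 2] ((![C (v 0), X 0] : Fin 2 → _) i)) from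
          funext fun i => by fin_cases i <;> simp]
    have hev2 : eval v (rename ![(0 : Fin 3), 2] ψ)
        = eval ![v 1, v 2] (aeval ![C (v 0), X 1] ψ : MvPolynomial (Fin 2) k) := by
      rw [eval_rename, my_eval_aeval,
        show (v ∘ ![(0 : Fin 3), 2])
            = (fun i => eval ![v 1, v 2] ((![C (v 0), X 1] : Fin 2 → _) i)) from
          funext fun i => by fin_cases i <;> simp]
    have hevf : eval ![v 1, v 2] (aeval ![C (v 0), X 0, X 1] f : MvPolynomial (Fin 2) k)
        = eval v f := by
      rw [my_eval_aeval]
      exact congrArg (fun g => eval g f)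
        (funext fun i => by fin_cases i <;> simp)
    rw [map_mul, hev1, hev2]
    by_cases h0 : (aeval ![C (v 0), X 0] ψ : MvPolynomial (Fin 2) k) = 0
    · rw [h0, map_zero, zero_mul]
    · obtain ⟨n, g, hg⟩ := (myIsUnit_away_iff _ _).mp (h (v 0) h0)
      have hq := congrArg (eval ![v 1, v 2]) hg
      rw [map_pow, map_mul, map_mul, hevf, hv, zero_mul] at hq
      by_contra hne
      exact pow_ne_zero n hne hq
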